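/- For n ≥ 3, n ≠ 4, and a ∈ B^n, the function U_a(x) = ((1-|a|²)/(|a|²|x|² - 2a·x + 1))^{(n-4)/2} + ((n-4)/4)(1 - |x|²)((1-|a|²)/(|a|²|x|² - 2a·x + 1))^{(n-2)/2} is biharmonic on the closed unit ball B^n and satisfies the Neumann condition ∂U_a/∂r = -((n-4)/2) U_a on S^{n-1}. -/

import Mathlib

open scoped BigOperators RealInnerProductSpace

/-- The Euclidean Laplacian of a function on `ℝⁿ` (as `EuclideanSpace`). -/
noncomputable def lapl {n : ℕ} (f : EuclideanSpace ℝ (Fin n) → ℝ)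
    (x : EuclideanSpace ℝ (Fin n)) : ℝ :=
  ∑ i : Fin n, fderiv ℝ (fun y => fderiv ℝ f y (EuclideanSpace.single i 1)) x
    (EuclideanSpace.single i 1)

/-- The Möbius conformal factor `(1-|a|²)/(|a|²|x|² - 2 a·x + 1)`. -/
noncomputable def mobiusFactor {n : ℕ} (a x : EuclideanSpace ℝ (Fin n)) : ℝ :=
  (1 - ‖a‖ ^ 2) / (‖a‖ ^ 2 * ‖x‖ ^ 2 - 2 * ⟪a, x⟫ + 1)

namespace Stmt16

open scoped Topology

variable {n : ℕ}

noncomputable def qf (a x : EuclideanSpace ℝ (Fin n)) : ℝ := ‖a‖^2*‖x‖^2 - 2*⟪a,x⟫ + 1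

lemma qf_cont (a : EuclideanSpace ℝ (Fin n)) : Continuous (qf a) := by
  unfold qf
  exact ((continuous_const.mul (continuous_norm.pow 2)).sub
    (continuous_const.mul (continuous_const.inner continuous_id))).add continuous_const

lemma qf_pos (a x : EuclideanSpace ℝ (Fin n)) (ha : ‖a‖ < 1) (hx : ‖x‖ ≤ 1) : 0 < qf a x := by
  have h1 := real_inner_le_norm a x
  have h2 : ‖a‖*‖x‖ < 1 := by nlinarith [norm_nonneg a, norm_nonneg x]
  have e1 : ‖a‖^2*‖x‖^2 = (‖a‖*‖x‖)^2 := by ring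
  unfold qf
  nlinarith [mul_pos (sub_pos.2 h2) (sub_pos.2 h2)]

lemma hasFDerivAt_normsq (y : EuclideanSpace ℝ (Fin n)) :
    HasFDerivAt (fun y : EuclideanSpace ℝ (Fin n) => ‖y‖^2) ((2:ℕ) • innerSL ℝ y) y := by
  simpa using (hasFDerivAt_id y).norm_sq

noncomputable def DQ (a y : EuclideanSpace ℝ (Fin n)) : EuclideanSpace ℝ (Fin n) →L[ℝ] ℝ :=
  ‖a‖^2 • (2:ℕ) • innerSL ℝ y - (2:ℝ) • innerSL ℝ a

lemma hasFDerivAt_qf (a y : EuclideanSpace ℝ (Fin n)) :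
    HasFDerivAt (qf a) (DQ a y) y := by
  unfold qf DQ
  exact (((hasFDerivAt_normsq y).const_mul (‖a‖^2)).sub
    (((innerSL ℝ a).hasFDerivAt).const_mul 2)).add_const 1

lemma hasFDerivAt_proj (i : Fin n) (y : EuclideanSpace ℝ (Fin n)) :
    HasFDerivAt (fun y : EuclideanSpace ℝ (Fin n) => y i) (EuclideanSpace.proj (𝕜 := ℝ) i) y :=
  (EuclideanSpace.proj (𝕜 := ℝ) i).hasFDerivAt

variable (a : EuclideanSpace ℝ (Fin n))

noncomputable def bas (A B γ : ℝ) (y : EuclideanSpace ℝ (Fin n)) : ℝ :=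
  (A + B*‖y‖^2) * qf a y ^ γ

noncomputable def Gf (A B γ : ℝ) (i : Fin n) (y : EuclideanSpace ℝ (Fin n)) : ℝ :=
  (A + B*‖y‖^2) * (γ * qf a y ^ (γ-1)) * (2*‖a‖^2 * y i - 2 * a i)
    + qf a y ^ γ * (B * (2 * y i))

lemma hasFDerivAt_bas (A B γ : ℝ) {y : EuclideanSpace ℝ (Fin n)} (h : qf a y ≠ 0) :
    HasFDerivAt (bas a A B γ)
      ((A + B*‖y‖^2) • ((γ * qf a y ^ (γ-1)) • DQ a y)
        + (qf a y ^ γ) • (B • ((2:ℕ) • innerSL ℝ y))) y := by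
  unfold bas
  exact (((hasFDerivAt_normsq y).const_mul B).const_add A).mul
    (HasFDerivAt.rpow_const (p := γ) (hasFDerivAt_qf a y) (Or.inl h))

noncomputable def lfml (A B γ : ℝ) (x : EuclideanSpace ℝ (Fin n)) : ℝ :=
  (2*(n:ℝ)*B + 4*B*γ) * qf a x ^ γ
  + (4*B*γ*(‖a‖^2*‖x‖^2 - 1) + 2*‖a‖^2*γ*((n:ℝ)+2*γ-2)*(A+B*‖x‖^2)) * qf a x ^ (γ-1)

lemma lapl_two (A B γ A' B' δ : ℝ) {x : EuclideanSpace ℝ (Fin n)} (hx : 0 < qf a x) :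
    lapl (fun y => bas a A B γ y + bas a A' B' δ y) x =
      lfml a A B γ x + lfml a A' B' δ x := by
  have hopen : IsOpen {y : EuclideanSpace ℝ (Fin n) | 0 < qf a y} :=
    isOpen_lt continuous_const (qf_cont a)
  have hxne : qf a x ≠ 0 := ne_of_gt hx
  unfold lapl
  have key : ∀ i : Fin n,
      fderiv ℝ (fun y => fderiv ℝ (fun y => bas a A B γ y + bas a A' B' δ y) y
          (EuclideanSpace.single i 1)) x (EuclideanSpace.single i 1)
      = ((4*‖a‖^2*‖a‖^2*(A+B*‖x‖^2)*γ*(γ-1)*qf a x^(γ-1-1) + 8*‖a‖^2*B*γ*qf a x^(γ-1))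
          + (4*‖a‖^2*‖a‖^2*(A'+B'*‖x‖^2)*δ*(δ-1)*qf a x^(δ-1-1) + 8*‖a‖^2*B'*δ*qf a x^(δ-1))) * (x i * x i)
        + ((-8*‖a‖^2*(A+B*‖x‖^2)*γ*(γ-1)*qf a x^(γ-1-1) - 8*B*γ*qf a x^(γ-1))
          + (-8*‖a‖^2*(A'+B'*‖x‖^2)*δ*(δ-1)*qf a x^(δ-1-1) - 8*B'*δ*qf a x^(δ-1))) * (a i * x i)
        + ((4*(A+B*‖x‖^2)*γ*(γ-1)*qf a x^(γ-1-1)) + (4*(A'+B'*‖x‖^2)*δ*(δ-1)*qf a x^(δ-1-1))) * (a i * a i)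
        + ((2*‖a‖^2*(A+B*‖x‖^2)*γ*qf a x^(γ-1) + 2*B*qf a x^γ)
          + (2*‖a‖^2*(A'+B'*‖x‖^2)*δ*qf a x^(δ-1) + 2*B'*qf a x^δ)) := by
    intro i
    have hev : (fun y => fderiv ℝ (fun y => bas a A B γ y + bas a A' B' δ y) y
        (EuclideanSpace.single i 1)) =ᶠ[𝓝 x]
        (fun y => Gf a A B γ i y + Gf a A' B' δ i y) := by
      filter_upwards [hopen.mem_nhds hx] with y hy
      erw [((hasFDerivAt_bas a A B γ (ne_of_gt hy)).add
        (hasFDerivAt_bas a A' B' δ (ne_of_gt hy))).fderiv]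
      simp [Gf, DQ, EuclideanSpace.inner_single_right, EuclideanSpace.single_apply, innerSL_apply_apply]
      ring
    rw [hev.fderiv_eq]
    have H1 := (((((hasFDerivAt_normsq x).const_mul B).const_add A).mul
      ((HasFDerivAt.rpow_const (p := γ-1) (hasFDerivAt_qf a x) (Or.inl hxne)).const_mul γ)).mul
      (((hasFDerivAt_proj i x).const_mul (2*‖a‖^2)).sub_const (2*a i))).add
      ((HasFDerivAt.rpow_const (p := γ) (hasFDerivAt_qf a x) (Or.inl hxne)).mul
      (((hasFDerivAt_proj i x).const_mul 2).const_mul B))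
    have H2 := (((((hasFDerivAt_normsq x).const_mul B').const_add A').mul
      ((HasFDerivAt.rpow_const (p := δ-1) (hasFDerivAt_qf a x) (Or.inl hxne)).const_mul δ)).mul
      (((hasFDerivAt_proj i x).const_mul (2*‖a‖^2)).sub_const (2*a i))).add
      ((HasFDerivAt.rpow_const (p := δ) (hasFDerivAt_qf a x) (Or.inl hxne)).mul
      (((hasFDerivAt_proj i x).const_mul 2).const_mul B'))
    unfold Gf
    erw [(H1.add H2).fderiv]
    simp [DQ, EuclideanSpace.inner_single_right, EuclideanSpace.single_apply, innerSL_apply_apply]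
    ring
  rw [Finset.sum_congr rfl (fun i _ => key i)]
  have hxx : ∑ i, x i * x i = ‖x‖^2 := by
    rw [EuclideanSpace.norm_eq, Real.sq_sqrt (by positivity)]
    refine Finset.sum_congr rfl fun i _ => ?_
    rw [Real.norm_eq_abs, sq_abs, sq]
  have hax : ∑ i, a i * x i = ⟪a,x⟫ := by
    simp [PiLp.inner_apply, RCLike.inner_apply, conj_trivial]
    exact Finset.sum_congr rfl fun _ _ => mul_comm _ _
  have haa : ∑ i, a i * a i = ‖a‖^2 := by
    rw [EuclideanSpace.norm_eq, Real.sq_sqrt (by positivity)]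
    refine Finset.sum_congr rfl fun i _ => ?_
    rw [Real.norm_eq_abs, sq_abs, sq]
  simp only [Finset.sum_add_distrib, ← Finset.mul_sum, hxx, hax, haa, Finset.sum_const,
    Finset.card_univ, Fintype.card_fin, nsmul_eq_mul]
  have hsub : ∀ (γ:ℝ), qf a x ^ (γ-1) * qf a x = qf a x ^ γ := by
    intro γ
    rw [← Real.rpow_add_one hxne (γ-1)]
    congr 1
    ring
  unfold lfml
  rw [← hsub γ, ← hsub (γ-1), ← hsub δ, ← hsub (δ-1)]
  unfold qf
  ring

lemma lapl_congr {f g : EuclideanSpace ℝ (Fin n) → ℝ} {x : EuclideanSpace ℝ (Fin n)}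
    (h : f =ᶠ[𝓝 x] g) : lapl f x = lapl g x := by
  unfold lapl
  refine Finset.sum_congr rfl fun i _ => ?_
  have h2 : (fun y => fderiv ℝ f y (EuclideanSpace.single i 1)) =ᶠ[𝓝 x]
      (fun y => fderiv ℝ g y (EuclideanSpace.single i 1)) := by
    filter_upwards [h.fderiv (𝕜 := ℝ)] with y hy
    rw [hy]
  rw [h2.fderiv_eq]

lemma mobius_eq (y : EuclideanSpace ℝ (Fin n)) : mobiusFactor a y = (1-‖a‖^2) / qf a y := rfl

lemma U_eq_bas (ha : ‖a‖ < 1) (y : EuclideanSpace ℝ (Fin n)) (hy : 0 < qf a y) :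
    mobiusFactor a y ^ (((n : ℝ) - 4) / 2) +
      ((n : ℝ) - 4) / 4 * (1 - ‖y‖ ^ 2) * mobiusFactor a y ^ (((n : ℝ) - 2) / 2)
    = bas a ((1-‖a‖^2) ^ (((n : ℝ) - 4) / 2)) 0 (-(((n : ℝ) - 4) / 2)) y
      + bas a (((n : ℝ) - 4) / 4 * (1-‖a‖^2) ^ (((n : ℝ) - 2) / 2))
          (-(((n : ℝ) - 4) / 4 * (1-‖a‖^2) ^ (((n : ℝ) - 2) / 2)))
          (-(((n : ℝ) - 2) / 2)) y := by
  have hc : (0:ℝ) < 1 - ‖a‖^2 := by nlinarith [norm_nonneg a]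
  unfold bas
  rw [mobius_eq, Real.div_rpow hc.le hy.le, Real.div_rpow hc.le hy.le,
    Real.rpow_neg hy.le, Real.rpow_neg hy.le]
  have h1 : qf a y ^ (((n : ℝ) - 4) / 2) ≠ 0 := ne_of_gt (Real.rpow_pos_of_pos hy _)
  have h2 : qf a y ^ (((n : ℝ) - 2) / 2) ≠ 0 := ne_of_gt (Real.rpow_pos_of_pos hy _)
  field_simp
  ring

lemma dl (y : EuclideanSpace ℝ (Fin n)) :
    lfml a ((1-‖a‖^2) ^ (((n : ℝ) - 4) / 2)) 0 (-(((n : ℝ) - 4) / 2)) y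
      + lfml a (((n : ℝ) - 4) / 4 * (1-‖a‖^2) ^ (((n : ℝ) - 2) / 2))
          (-(((n : ℝ) - 4) / 4 * (1-‖a‖^2) ^ (((n : ℝ) - 2) / 2)))
          (-(((n : ℝ) - 2) / 2)) y
    = bas a (-2*((n:ℝ)-4)*‖a‖^2*(1-‖a‖^2)^(((n : ℝ) - 4) / 2)
          - ((n:ℝ)-4)*(1-‖a‖^2)^(((n : ℝ) - 2) / 2)) 0 (-(((n : ℝ) - 2) / 2)) y
      + bas a (-(((n:ℝ)-4)*((n:ℝ)-2)/2*(1-‖a‖^2)^(((n : ℝ) - 2) / 2)))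
          (‖a‖^2*((n:ℝ)-4)*((n:ℝ)-2)/2*(1-‖a‖^2)^(((n : ℝ) - 2) / 2))
          (-(((n : ℝ) - 2) / 2) - 1) y := by
  unfold lfml bas
  rw [show (-(((n:ℝ)-4)/2) - 1 : ℝ) = -(((n:ℝ)-2)/2) from by ring]
  ring

lemma dl2 (x : EuclideanSpace ℝ (Fin n)) :
    lfml a (-2*((n:ℝ)-4)*‖a‖^2*(1-‖a‖^2)^(((n : ℝ) - 4) / 2)
          - ((n:ℝ)-4)*(1-‖a‖^2)^(((n : ℝ) - 2) / 2)) 0 (-(((n : ℝ) - 2) / 2)) x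
      + lfml a (-(((n:ℝ)-4)*((n:ℝ)-2)/2*(1-‖a‖^2)^(((n : ℝ) - 2) / 2)))
          (‖a‖^2*((n:ℝ)-4)*((n:ℝ)-2)/2*(1-‖a‖^2)^(((n : ℝ) - 2) / 2))
          (-(((n : ℝ) - 2) / 2) - 1) x = 0 := by
  unfold lfml
  ring

lemma part1 (ha : ‖a‖ < 1) (x : EuclideanSpace ℝ (Fin n)) (hx : ‖x‖ ≤ 1) :
    lapl (lapl (fun y => mobiusFactor a y ^ (((n : ℝ) - 4) / 2) +
      ((n : ℝ) - 4) / 4 * (1 - ‖y‖ ^ 2) * mobiusFactor a y ^ (((n : ℝ) - 2) / 2))) x = 0 := by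
  have hopen : IsOpen {y : EuclideanSpace ℝ (Fin n) | 0 < qf a y} :=
    isOpen_lt continuous_const (qf_cont a)
  have hx0 : 0 < qf a x := qf_pos a x ha hx
  have e2' : lapl (fun y => mobiusFactor a y ^ (((n : ℝ) - 4) / 2) +
      ((n : ℝ) - 4) / 4 * (1 - ‖y‖ ^ 2) * mobiusFactor a y ^ (((n : ℝ) - 2) / 2)) =ᶠ[𝓝 x]
      (fun y => bas a (-2*((n:ℝ)-4)*‖a‖^2*(1-‖a‖^2)^(((n : ℝ) - 4) / 2)
          - ((n:ℝ)-4)*(1-‖a‖^2)^(((n : ℝ) - 2) / 2)) 0 (-(((n : ℝ) - 2) / 2)) y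
      + bas a (-(((n:ℝ)-4)*((n:ℝ)-2)/2*(1-‖a‖^2)^(((n : ℝ) - 2) / 2)))
          (‖a‖^2*((n:ℝ)-4)*((n:ℝ)-2)/2*(1-‖a‖^2)^(((n : ℝ) - 2) / 2))
          (-(((n : ℝ) - 2) / 2) - 1) y) := by
    filter_upwards [hopen.mem_nhds hx0] with y hy
    have ey : (fun z => mobiusFactor a z ^ (((n : ℝ) - 4) / 2) +
        ((n : ℝ) - 4) / 4 * (1 - ‖z‖ ^ 2) * mobiusFactor a z ^ (((n : ℝ) - 2) / 2)) =ᶠ[𝓝 y]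
        (fun z => bas a ((1-‖a‖^2) ^ (((n : ℝ) - 4) / 2)) 0 (-(((n : ℝ) - 4) / 2)) z
          + bas a (((n : ℝ) - 4) / 4 * (1-‖a‖^2) ^ (((n : ℝ) - 2) / 2))
              (-(((n : ℝ) - 4) / 4 * (1-‖a‖^2) ^ (((n : ℝ) - 2) / 2)))
              (-(((n : ℝ) - 2) / 2)) z) := by
      filter_upwards [hopen.mem_nhds hy] with z hz
      exact U_eq_bas a ha z hz
    rw [lapl_congr ey, lapl_two a _ _ _ _ _ _ hy]
    exact dl a y
  rw [lapl_congr e2', lapl_two a _ _ _ _ _ _ hx0]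
  exact dl2 a x


lemma part2 (ha : ‖a‖ < 1) (x : EuclideanSpace ℝ (Fin n)) (hx : ‖x‖ = 1) :
    deriv (fun t : ℝ => mobiusFactor a (t • x) ^ (((n : ℝ) - 4) / 2) +
      ((n : ℝ) - 4) / 4 * (1 - ‖t • x‖ ^ 2) * mobiusFactor a (t • x) ^ (((n : ℝ) - 2) / 2)) 1
    = -(((n : ℝ) - 4) / 2) * (mobiusFactor a x ^ (((n : ℝ) - 4) / 2) +
      ((n : ℝ) - 4) / 4 * (1 - ‖x‖ ^ 2) * mobiusFactor a x ^ (((n : ℝ) - 2) / 2)) := by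
  have hc : (0:ℝ) < 1 - ‖a‖^2 := by nlinarith [norm_nonneg a]
  have hfun : (fun t : ℝ => mobiusFactor a (t • x) ^ (((n : ℝ) - 4) / 2) +
      ((n : ℝ) - 4) / 4 * (1 - ‖t • x‖ ^ 2) * mobiusFactor a (t • x) ^ (((n : ℝ) - 2) / 2))
      = (fun t : ℝ => ((1-‖a‖^2) / (‖a‖^2*t^2 - 2*(⟪a,x⟫*t) + 1)) ^ (((n : ℝ) - 4) / 2) +
        ((n : ℝ) - 4) / 4 * ((1 - t^2) *
          ((1-‖a‖^2) / (‖a‖^2*t^2 - 2*(⟪a,x⟫*t) + 1)) ^ (((n : ℝ) - 2) / 2))) := by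
    funext t
    have h1 : ‖t • x‖^2 = t^2 := by
      rw [norm_smul, hx, mul_one, Real.norm_eq_abs, sq_abs]
    have h2 : ⟪a, t • x⟫ = ⟪a,x⟫*t := by
      rw [real_inner_smul_right]; ring
    unfold mobiusFactor
    rw [h1, h2]
    ring
  rw [hfun]
  have hq : (0:ℝ) < ‖a‖^2*(1:ℝ)^2 - 2*(⟪a,x⟫*1) + 1 := by
    have h0 := qf_pos a x ha (le_of_eq hx)
    unfold qf at h0
    rw [hx] at h0
    nlinarith [h0]
  have hqne : (‖a‖^2*(1:ℝ)^2 - 2*(⟪a,x⟫*1) + 1) ≠ 0 := ne_of_gt hq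
  have hQ := (((hasDerivAt_pow 2 (1:ℝ)).const_mul (‖a‖^2)).sub
    (((hasDerivAt_id' (x := (1:ℝ))).const_mul ⟪a,x⟫).const_mul 2)).add_const 1
  have hdiv := (hasDerivAt_const (1:ℝ) (1-‖a‖^2)).div hQ hqne
  have hbpos : (0:ℝ) < (1-‖a‖^2) / (‖a‖^2*(1:ℝ)^2 - 2*(⟪a,x⟫*1) + 1) := div_pos hc hq
  have hbne := ne_of_gt hbpos
  have h1 := HasDerivAt.rpow_const (p := (((n : ℝ) - 4) / 2)) hdiv (Or.inl hbne)
  have h2 := HasDerivAt.rpow_const (p := (((n : ℝ) - 2) / 2)) hdiv (Or.inl hbne)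
  have hlin := (hasDerivAt_pow 2 (1:ℝ)).const_sub 1
  have H := h1.add ((hlin.mul h2).const_mul (((n : ℝ) - 4) / 4))
  erw [H.deriv]
  simp only [Pi.sub_apply, Pi.div_apply, Pi.add_apply]
  have hqq : mobiusFactor a x = (1-‖a‖^2) / (‖a‖^2*(1:ℝ)^2 - 2*(⟪a,x⟫*1) + 1) := by
    unfold mobiusFactor
    rw [hx]
    norm_num
  rw [hqq, hx]
  set b := (1-‖a‖^2) / (‖a‖^2*(1:ℝ)^2 - 2*(⟪a,x⟫*1) + 1) with hb
  have k1 : b ^ (((n:ℝ)-4)/2) = b ^ (((n:ℝ)-4)/2 - 1) * b := by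
    rw [← Real.rpow_add_one hbne (((n:ℝ)-4)/2 - 1)]
    congr 1
    ring
  have k3 : b ^ (((n:ℝ)-2)/2 - 1) = b ^ (((n:ℝ)-4)/2 - 1) * b := by
    rw [← Real.rpow_add_one hbne (((n:ℝ)-4)/2 - 1)]
    congr 1
    ring
  have k2 : b ^ (((n:ℝ)-2)/2) = b ^ (((n:ℝ)-4)/2 - 1) * b * b := by
    rw [← Real.rpow_add_one hbne, ← Real.rpow_add_one hbne]
    congr 1
    ring
  have hcne : (1 - ‖a‖^2) ≠ 0 := ne_of_gt hc
  rw [k1, k2, k3]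
  set r := (⟪a,x⟫ : ℝ) with hr
  set V := b ^ (((n:ℝ)-4)/2 - 1) with hV
  set Q := ‖a‖^2*(1:ℝ)^2 - 2*(⟪a,x⟫*1) + 1 with hQdef
  rw [hb]
  field_simp
  rw [hQdef]
  ring

end Stmt16

/-- for `n ≥ 3`, `n ≠ 4`, `a ∈ Bⁿ`, the function
`U_a = Û_a + ((n-4)/4)(1-|x|²) Û_a^{(n-2)/(n-4)}`, where
`Û_a = ((1-|a|²)/(|a|²|x|²-2a·x+1))^{(n-4)/2}`, is biharmonic on the closed unit ball and
satisfies `∂U_a/∂r = -((n-4)/2) U_a` on the unit sphere. -/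
theorem stmt16 (n : ℕ) (hn : 3 ≤ n) (hn4 : n ≠ 4)
    (a : EuclideanSpace ℝ (Fin n)) (ha : ‖a‖ < 1) :
    let U : EuclideanSpace ℝ (Fin n) → ℝ := fun x =>
      mobiusFactor a x ^ (((n : ℝ) - 4) / 2) +
        ((n : ℝ) - 4) / 4 * (1 - ‖x‖ ^ 2) * mobiusFactor a x ^ (((n : ℝ) - 2) / 2)
    (∀ x : EuclideanSpace ℝ (Fin n), ‖x‖ ≤ 1 → lapl (lapl U) x = 0) ∧
    (∀ x : EuclideanSpace ℝ (Fin n), ‖x‖ = 1 →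
      deriv (fun t : ℝ => U (t • x)) 1 = -(((n : ℝ) - 4) / 2) * U x) := by
  intro U
  constructor
  · intro x hx
    exact Stmt16.part1 a ha x hx
  · intro x hx
    have h2 := Stmt16.part2 a ha x hx
    simpa [U] using h2
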